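/- Let S[1..n] be a string, 1 ≤ i ≤ j ≤ n, and 0 < τ ≤ 1. If A is a set of ⌊1/τ⌋ + 1 distinct symbols, each of which occurs in S[i..j], then at least one symbol of A is a τ-minority of S[i..j]. Consequently, if S[i..j] has any τ-minority, then every list of min(⌊1/τ⌋ + 1, d) distinct symbols occurring in S[i..j], where d is the number of distinct symbols in S[i..j], contains a τ-minority. -/

import Mathlib

/-- `occ S a i j` is the number of positions `k` with `i ≤ k ≤ j` and `S k = a`. -/
def occ {α : Type*} [DecidableEq α] (S : ℕ → α) (a : α) (i j : ℕ) : ℕ :=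
  ((Finset.Icc i j).filter (fun k => S k = a)).card

/-- A symbol `a` is a τ-minority of `S[i..j]` if it occurs in `S[i..j]`
but is not a τ-majority. -/
def IsMinority {α : Type*} [DecidableEq α] (S : ℕ → α) (τ : ℝ) (i j : ℕ) (a : α) : Prop :=
  (∃ k, i ≤ k ∧ k ≤ j ∧ S k = a) ∧
    ¬ ((occ S a i j : ℝ) ≥ τ * ((j : ℝ) - (i : ℝ) + 1))

lemma sum_occ_le {α : Type*} [DecidableEq α] (S : ℕ → α) (i j : ℕ) (A : Finset α) :
    ∑ a ∈ A, occ S a i j ≤ (Finset.Icc i j).card := by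
  classical
  unfold occ
  rw [← Finset.card_biUnion]
  · exact Finset.card_le_card (fun x hx => by
      simp only [Finset.mem_biUnion, Finset.mem_filter] at hx
      obtain ⟨a, _, hx, _⟩ := hx
      exact hx)
  · intro a _ b _ hab
    rw [Function.onFun, Finset.disjoint_left]
    intro k hk hk'
    simp only [Finset.mem_filter] at hk hk'
    exact hab (hk.2 ▸ hk'.2)

/-- Any `⌊1/τ⌋ + 1` distinct symbols occurring in `S[i..j]` include a τ-minority;
consequently, if `S[i..j]` has a τ-minority at all, then every list of
`min(⌊1/τ⌋ + 1, d)` distinct symbols occurring in `S[i..j]` contains one. -/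
theorem stmt_2 {α : Type*} [DecidableEq α] (S : ℕ → α) (n : ℕ) (τ : ℝ)
    (hτ0 : 0 < τ) (hτ1 : τ ≤ 1) (i j : ℕ)
    (hi : 1 ≤ i) (hij : i ≤ j) (hjn : j ≤ n) :
    (∀ A : Finset α, A.card = ⌊1 / τ⌋₊ + 1 →
        (∀ a ∈ A, ∃ k, i ≤ k ∧ k ≤ j ∧ S k = a) →
        ∃ a ∈ A, IsMinority S τ i j a)
    ∧
    ((∃ a, IsMinority S τ i j a) →
      ∀ A : Finset α, A ⊆ (Finset.Icc i j).image S →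
        A.card = min (⌊1 / τ⌋₊ + 1) ((Finset.Icc i j).image S).card →
        ∃ a ∈ A, IsMinority S τ i j a) := by
  have L0 : (0:ℝ) < (j : ℝ) - (i : ℝ) + 1 := by
    have : (i:ℝ) ≤ (j:ℝ) := by exact_mod_cast hij
    linarith
  have part1 : ∀ A : Finset α, A.card = ⌊1 / τ⌋₊ + 1 →
      (∀ a ∈ A, ∃ k, i ≤ k ∧ k ≤ j ∧ S k = a) →
      ∃ a ∈ A, IsMinority S τ i j a := by
    intro A hcard hocc
    by_contra h
    push_neg at h
    have hmaj : ∀ a ∈ A, (occ S a i j : ℝ) ≥ τ * ((j : ℝ) - (i : ℝ) + 1) := by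
      intro a ha
      have := h a ha
      unfold IsMinority at this
      by_contra hcon
      exact this ⟨hocc a ha, hcon⟩
    -- sum bound
    have hsum : ∑ a ∈ A, (occ S a i j : ℝ) ≤ (j : ℝ) - (i : ℝ) + 1 := by
      have := sum_occ_le S i j A
      rw [Nat.card_Icc] at this
      have h2 : ((∑ a ∈ A, occ S a i j : ℕ) : ℝ) ≤ ((j + 1 - i : ℕ) : ℝ) := by
        exact_mod_cast this
      rw [Nat.cast_sum] at h2
      have : ((j + 1 - i : ℕ) : ℝ) = (j : ℝ) - (i : ℝ) + 1 := by
        rw [Nat.cast_sub (by omega)]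
        push_cast
        ring
      linarith
    have hlow : (A.card : ℝ) * (τ * ((j : ℝ) - (i : ℝ) + 1)) ≤ ∑ a ∈ A, (occ S a i j : ℝ) := by
      calc (A.card : ℝ) * (τ * ((j : ℝ) - (i : ℝ) + 1))
          = ∑ _a ∈ A, τ * ((j : ℝ) - (i : ℝ) + 1) := by
            rw [Finset.sum_const, nsmul_eq_mul]
        _ ≤ ∑ a ∈ A, (occ S a i j : ℝ) := Finset.sum_le_sum (fun a ha => hmaj a ha)
    have hgt : (1:ℝ) < (A.card : ℝ) * τ := by
      rw [hcard]
      have hfl : (1:ℝ)/τ < (⌊1/τ⌋₊ : ℝ) + 1 := Nat.lt_floor_add_one _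
      have : (1:ℝ)/τ * τ < ((⌊1/τ⌋₊ : ℝ) + 1) * τ := by
        exact mul_lt_mul_of_pos_right hfl hτ0
      rw [div_mul_cancel₀ 1 (ne_of_gt hτ0)] at this
      push_cast
      linarith
    nlinarith
  refine ⟨part1, ?_⟩
  rintro ⟨a₀, ha₀⟩ A hsub hcard
  rcases le_or_gt (⌊1 / τ⌋₊ + 1) ((Finset.Icc i j).image S).card with hle | hlt
  · apply part1 A (by omega)
    intro a ha
    have := hsub ha
    simp only [Finset.mem_image, Finset.mem_Icc] at this
    obtain ⟨k, ⟨hk1, hk2⟩, hk3⟩ := this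
    exact ⟨k, hk1, hk2, hk3⟩
  · have hAeq : A = (Finset.Icc i j).image S := by
      apply Finset.eq_of_subset_of_card_le hsub
      omega
    refine ⟨a₀, ?_, ha₀⟩
    rw [hAeq]
    obtain ⟨⟨k, hk1, hk2, hk3⟩, _⟩ := ha₀
    exact Finset.mem_image.mpr ⟨k, Finset.mem_Icc.mpr ⟨hk1, hk2⟩, hk3⟩
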